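/- Let a < b, let α ∈ (0,1), and let ψ : [a,b] → ℂ be α-Hölder continuous with ψ(a) = 0. Then the function t ↦ ψ(t)/(t−a) is Lebesgue integrable on (a,b), and there is a constant C = C(a,b,α) > 0, independent of ψ, such that for every λ ∈ (a, (a+b)/2] one has | ( p.v.∫_a^b ψ(t)/(t−λ) dt + iπψ(λ) ) − ∫_a^b ψ(t)/(t−a) dt | ≤ C ‖ψ‖_{C^{0,α}} |λ − a|^α. -/

import Mathlib

open MeasureTheory Filter Set

section Helpers

lemma intInt_pow_sub {p : ℝ} (hp : -1 < p) (c d : ℝ) :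
    IntervalIntegrable (fun t => (t - c) ^ p) volume c d := by
  have h := (intervalIntegral.intervalIntegrable_rpow' (a := 0) (b := d - c) hp).comp_sub_right c
  simpa using h

lemma intInt_pow_sub' {p : ℝ} (hp : -1 < p) (c d : ℝ) :
    IntervalIntegrable (fun t => (d - t) ^ p) volume c d := by
  have h := (intervalIntegral.intervalIntegrable_rpow' (a := 0) (b := d - c) hp).comp_sub_left d
  simpa using h.symm

lemma pow_sub_integrableOn {p : ℝ} (hp : -1 < p) {c d : ℝ} (h : c ≤ d) (K : ℝ) :
    IntegrableOn (fun t => K * (t - c) ^ p) (Set.Icc c d) :=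
  (intervalIntegrable_iff_integrableOn_Icc_of_le h).mp ((intInt_pow_sub hp c d).const_mul K)

lemma pow_sub_integrableOn' {p : ℝ} (hp : -1 < p) {c d : ℝ} (h : c ≤ d) (K : ℝ) :
    IntegrableOn (fun t => K * (d - t) ^ p) (Set.Icc c d) :=
  (intervalIntegrable_iff_integrableOn_Icc_of_le h).mp ((intInt_pow_sub' hp c d).const_mul K)

lemma abs_pow_integrableOn {p : ℝ} (hp : -1 < p) {c d lam : ℝ} (h1 : c ≤ lam) (h2 : lam ≤ d)
    (K : ℝ) : IntegrableOn (fun t => K * |t - lam| ^ p) (Set.Icc c d) := by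
  rw [← Set.Icc_union_Icc_eq_Icc h1 h2]
  apply IntegrableOn.union
  · exact (pow_sub_integrableOn' hp h1 K).congr_fun
      (fun t ht => by rw [abs_of_nonpos (by simp at ht; linarith)]; ring_nf) measurableSet_Icc
  · exact (pow_sub_integrableOn hp h2 K).congr_fun
      (fun t ht => by rw [abs_of_nonneg (by simp at ht; linarith)]) measurableSet_Icc

lemma integral_pow_sub {p : ℝ} (hp : -1 < p) {c d : ℝ} (hcd : c ≤ d) :
    ∫ t in Set.Ioc c d, (t - c) ^ p = (d - c) ^ (p + 1) / (p + 1) := by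
  rw [← intervalIntegral.integral_of_le hcd,
    intervalIntegral.integral_comp_sub_right (fun u => u ^ p) c,
    sub_self, integral_rpow (Or.inl hp), Real.zero_rpow (by linarith : p + 1 ≠ 0)]
  ring

lemma integral_pow_sub' {p : ℝ} (hp : -1 < p) {c d : ℝ} (hcd : c ≤ d) :
    ∫ t in Set.Ioc c d, (d - t) ^ p = (d - c) ^ (p + 1) / (p + 1) := by
  rw [← intervalIntegral.integral_of_le hcd,
    intervalIntegral.integral_comp_sub_left (fun u => u ^ p) d,
    sub_self, integral_rpow (Or.inl hp), Real.zero_rpow (by linarith : p + 1 ≠ 0)]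
  ring

lemma integral_inv_shift {lam c d : ℝ} (h : (0:ℝ) ∉ Set.uIcc (c - lam) (d - lam)) :
    ∫ t in c..d, (t - lam)⁻¹ = Real.log ((d - lam) / (c - lam)) := by
  rw [intervalIntegral.integral_comp_sub_right (fun u => u⁻¹) lam]
  simpa [one_div] using integral_one_div h

lemma cintegral_inv {lam c d : ℝ} (hcd : c ≤ d) (h : (0:ℝ) ∉ Set.uIcc (c - lam) (d - lam)) :
    ∫ t in Set.Ioc c d, ((t:ℂ) - (lam:ℂ))⁻¹ =
      Complex.ofReal (Real.log ((d - lam) / (c - lam))) := by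
  have heq : ∀ t : ℝ, ((t:ℂ) - (lam:ℂ))⁻¹ = (((t - lam)⁻¹ : ℝ) : ℂ) := by
    intro t; push_cast; ring
  simp only [heq]
  rw [show ∫ t in Set.Ioc c d, (((t - lam)⁻¹ : ℝ) : ℂ) =
        ((∫ t in Set.Ioc c d, (t - lam)⁻¹ : ℝ) : ℂ) from integral_ofReal,
    ← intervalIntegral.integral_of_le hcd, integral_inv_shift h]

lemma holder_contOn {a b α K : ℝ} (hα : 0 < α) {ψ : ℝ → ℂ}
    (hK : ∀ t ∈ Set.Icc a b, ∀ t' ∈ Set.Icc a b, ‖ψ t - ψ t'‖ ≤ K * |t - t'| ^ α) :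
    ContinuousOn ψ (Set.Icc a b) := by
  intro x hx
  have hcont : Continuous fun t : ℝ => K * |t - x| ^ α := by
    apply continuous_const.mul
    apply Continuous.rpow_const ((continuous_id.sub continuous_const).abs)
    intro t; exact Or.inr hα.le
  have h0 : Tendsto (fun t => K * |t - x| ^ α) (nhdsWithin x (Set.Icc a b)) (nhds 0) := by
    have h2 := (hcont.tendsto x).mono_left (nhdsWithin_le_nhds (s := Set.Icc a b))
    simpa [Real.zero_rpow (ne_of_gt hα)] using h2
  have h3 : Tendsto (fun t => ‖ψ t - ψ x‖) (nhdsWithin x (Set.Icc a b)) (nhds 0) := by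
    apply squeeze_zero' (Filter.Eventually.of_forall fun t => norm_nonneg _) _ h0
    exact eventually_nhdsWithin_of_forall fun t ht => hK t ht x hx
  exact tendsto_iff_norm_sub_tendsto_zero.mpr h3

lemma cnorm_sub (x y : ℝ) : ‖(x:ℂ) - (y:ℂ)‖ = |x - y| :=
  calc ‖(x:ℂ) - (y:ℂ)‖ = ‖((x - y : ℝ) : ℂ)‖ := by norm_cast
    _ = |x - y| := by rw [Complex.norm_real, Real.norm_eq_abs]

lemma norm_holder_div {ψ : ℝ → ℂ} {K α : ℝ} {t lam : ℝ} (hα : α < 1)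
    (h : ‖ψ t - ψ lam‖ ≤ K * |t - lam| ^ α) :
    ‖(ψ t - ψ lam) / ((t:ℂ) - (lam:ℂ))‖ ≤ K * |t - lam| ^ (α - 1) := by
  rcases eq_or_ne t lam with rfl | hne
  · simp [Real.zero_rpow (by linarith : α - 1 ≠ 0)]
  have habs : (0:ℝ) < |t - lam| := abs_pos.2 (sub_ne_zero.2 hne)
  rw [norm_div, cnorm_sub, div_le_iff₀ habs]
  calc ‖ψ t - ψ lam‖ ≤ K * |t - lam| ^ α := h
    _ = K * |t - lam| ^ (α - 1) * |t - lam| := by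
        rw [mul_assoc, ← Real.rpow_add_one (ne_of_gt habs)]
        ring_nf

lemma meas_helper {a b : ℝ} {ψ : ℝ → ℂ} (hcont : ContinuousOn ψ (Set.Icc a b))
    {s : Set ℝ} (hs : MeasurableSet s) (hsub : s ⊆ Set.Icc a b) (z : ℂ) (c : ℝ) :
    AEStronglyMeasurable (fun t : ℝ => (ψ t - z) / ((t:ℂ) - (c:ℂ)))
      (volume.restrict s) := by
  simp only [div_eq_mul_inv]
  apply AEStronglyMeasurable.mul
  · exact ((hcont.mono hsub).sub continuousOn_const).aestronglyMeasurable hs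
  · exact (((Complex.measurable_ofReal.sub measurable_const)).inv).aestronglyMeasurable

lemma czne {t c : ℝ} (h : t ≠ c) : ((t:ℂ) - (c:ℂ)) ≠ 0 := by
  simpa [sub_eq_zero] using fun hh => h (by exact_mod_cast hh)

end Helpers

/-- The sup norm of ψ over [a,b]. -/
noncomputable def supNormIcc (a b : ℝ) (ψ : ℝ → ℂ) : ℝ :=
  ⨆ t : Set.Icc a b, ‖ψ (t : ℝ)‖

/-- The least α-Hölder constant of ψ on [a,b]. -/
noncomputable def holderSeminorm (a b α : ℝ) (ψ : ℝ → ℂ) : ℝ :=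
  sInf {M : ℝ | 0 ≤ M ∧ ∀ t ∈ Set.Icc a b, ∀ t' ∈ Set.Icc a b,
    ‖ψ t - ψ t'‖ ≤ M * |t - t'| ^ α}

/-- The Hölder norm ‖ψ‖_{C^{0,α}([a,b])} = sup norm + least Hölder constant. -/
noncomputable def holderNorm (a b α : ℝ) (ψ : ℝ → ℂ) : ℝ :=
  supNormIcc a b ψ + holderSeminorm a b α ψ

set_option maxHeartbeats 2000000 in
/-- if ψ is α-Hölder on [a,b] with ψ(a)=0, then t ↦ ψ(t)/(t-a) is integrable
on (a,b) and `r⁺(λ) = p.v.∫_a^b ψ(t)/(t-λ) dt + iπψ(λ)` is α-Hölder up to the endpoint a,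
with value `∫_a^b ψ(t)/(t-a) dt` there, the constant being independent of ψ. -/
theorem rplus_holder_endpoint (a b α : ℝ) (hab : a < b) (hα : α ∈ Set.Ioo (0:ℝ) 1) :
    ∃ C > 0, ∀ ψ : ℝ → ℂ,
      (∃ M : ℝ, 0 ≤ M ∧ ∀ t ∈ Set.Icc a b, ∀ t' ∈ Set.Icc a b,
        ‖ψ t - ψ t'‖ ≤ M * |t - t'| ^ α) →
      ψ a = 0 →
      MeasureTheory.IntegrableOn (fun t : ℝ => ψ t / ((t : ℂ) - (a : ℂ)))
        (Set.Ioo a b) ∧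
      ∀ lam ∈ Set.Ioc a ((a + b) / 2), ∀ R : ℂ,
        Filter.Tendsto
          (fun δ : ℝ => ∫ t in Set.Icc a b \ Set.Ioo (lam - δ) (lam + δ),
            ψ t / ((t : ℂ) - (lam : ℂ)))
          (nhdsWithin 0 (Set.Ioi 0)) (nhds R) →
        ‖(R + (Real.pi : ℂ) * Complex.I * ψ lam)
            - ∫ t in Set.Ioo a b, ψ t / ((t : ℂ) - (a : ℂ))‖
          ≤ C * holderNorm a b α ψ * |lam - a| ^ α := by
  obtain ⟨hα0, hα1⟩ := hα
  have h1α : (0:ℝ) < 1 - α := by linarith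
  have hp : (-1:ℝ) < α - 1 := by linarith
  refine ⟨4/α + 2/(1-α) + Real.pi, by positivity, ?_⟩
  rintro ψ ⟨M, hM0, hM⟩ hψa
  set K := holderSeminorm a b α ψ with hKdef
  have hSne : Set.Nonempty {M : ℝ | 0 ≤ M ∧ ∀ t ∈ Set.Icc a b, ∀ t' ∈ Set.Icc a b,
      ‖ψ t - ψ t'‖ ≤ M * |t - t'| ^ α} := ⟨M, hM0, hM⟩
  have hK0 : 0 ≤ K := le_csInf hSne fun m hm => hm.1
  have hK : ∀ t ∈ Set.Icc a b, ∀ t' ∈ Set.Icc a b, ‖ψ t - ψ t'‖ ≤ K * |t - t'| ^ α := by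
    intro t ht t' ht'
    rcases eq_or_ne t t' with rfl | hne
    · simp [Real.zero_rpow (ne_of_gt hα0)]
    · have habs : (0:ℝ) < |t - t'| ^ α :=
        Real.rpow_pos_of_pos (abs_pos.2 (sub_ne_zero.2 hne)) α
      rw [← div_le_iff₀ habs]
      exact le_csInf hSne fun m hm => (div_le_iff₀ habs).mpr (hm.2 t ht t' ht')
  have hmem_a : a ∈ Set.Icc a b := ⟨le_refl a, hab.le⟩
  have hψb : ∀ t ∈ Set.Icc a b, ‖ψ t‖ ≤ K * |t - a| ^ α := by
    intro t ht
    have h := hK t ht a hmem_a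
    rwa [hψa, sub_zero] at h
  have hKN : K ≤ holderNorm a b α ψ := by
    have h0 : 0 ≤ supNormIcc a b ψ := Real.iSup_nonneg fun t => norm_nonneg _
    unfold holderNorm
    rw [← hKdef]; linarith
  have hcont : ContinuousOn ψ (Set.Icc a b) := holder_contOn hα0 hK
  have hg2eq : ∀ t : ℝ, ψ t / ((t:ℂ) - (a:ℂ)) = (ψ t - ψ a) / ((t:ℂ) - (a:ℂ)) := by
    intro t; rw [hψa, sub_zero]
  have hg1_int_gen : ∀ c ∈ Set.Icc a b,
      IntegrableOn (fun t : ℝ => (ψ t - ψ c) / ((t:ℂ) - (c:ℂ))) (Set.Icc a b) := by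
    intro c hc
    apply Integrable.mono' (abs_pow_integrableOn hp hc.1 hc.2 K)
      (meas_helper hcont measurableSet_Icc Set.Subset.rfl (ψ c) c)
    exact ae_restrict_of_forall_mem measurableSet_Icc
      fun t ht => norm_holder_div hα1 (hK t ht c hc)
  have hg2int : IntegrableOn (fun t : ℝ => ψ t / ((t:ℂ) - (a:ℂ))) (Set.Ioo a b) := by
    have h := (hg1_int_gen a hmem_a).mono_set Set.Ioo_subset_Icc_self
    exact h.congr_fun (fun t _ => (hg2eq t).symm) measurableSet_Ioo
  refine ⟨hg2int, ?_⟩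
  rintro lam ⟨hla, hlmid⟩ R hR
  have hh : (0:ℝ) < lam - a := sub_pos.2 hla
  have hlb : lam < b := lt_of_le_of_lt hlmid (by linarith)
  have hlam_mem : lam ∈ Set.Icc a b := ⟨hla.le, hlb.le⟩
  set m : ℝ := lam + (lam - a) with hmdef
  have hm1 : a < m := by simp only [hmdef]; linarith
  have hm2 : m ≤ b := by simp only [hmdef]; linarith
  have hlam_lt_m : lam < m := by simp only [hmdef]; linarith
  set g1 : ℝ → ℂ := fun t => (ψ t - ψ lam) / ((t:ℂ) - (lam:ℂ)) with hg1def
  set c0 : ℝ := Real.log (b - lam) - Real.log (lam - a) with hc0def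
  set V : ℂ := (∫ t in Set.Ioo a b, g1 t) + ψ lam * (c0:ℂ) with hVdef
  have hg1_int : IntegrableOn g1 (Set.Icc a b) := hg1_int_gen lam hlam_mem
  have hg1sub : ∀ {s : Set ℝ}, s ⊆ Set.Icc a b → IntegrableOn g1 s :=
    fun hs => hg1_int.mono_set hs
  -- Step A: identification of R
  have hRV : R = V := by
    have hDCT : Tendsto
        (fun δ : ℝ => ∫ t in Set.Icc a b \ Set.Ioo (lam - δ) (lam + δ), g1 t)
        (nhdsWithin 0 (Set.Ioi 0)) (nhds (∫ t in Set.Icc a b, g1 t)) := by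
      have key := MeasureTheory.tendsto_integral_filter_of_dominated_convergence
        (μ := volume.restrict (Set.Icc a b))
        (F := fun δ : ℝ => (Set.Icc a b \ Set.Ioo (lam - δ) (lam + δ)).indicator g1)
        (f := g1) (bound := fun t => K * |t - lam| ^ (α - 1))
        (l := nhdsWithin (0:ℝ) (Set.Ioi 0))
        (Filter.Eventually.of_forall fun δ =>
          ((meas_helper hcont measurableSet_Icc Set.Subset.rfl (ψ lam) lam)).indicator
            (measurableSet_Icc.diff measurableSet_Ioo))
        (Filter.Eventually.of_forall fun δ =>
          ae_restrict_of_forall_mem measurableSet_Icc (by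
            intro t ht
            show ‖(Set.Icc a b \ Set.Ioo (lam - δ) (lam + δ)).indicator g1 t‖
              ≤ K * |t - lam| ^ (α - 1)
            by_cases hts : t ∈ Set.Icc a b \ Set.Ioo (lam - δ) (lam + δ)
            · rw [Set.indicator_of_mem hts]
              exact norm_holder_div hα1 (hK t ht lam hlam_mem)
            · rw [Set.indicator_of_notMem hts]
              simp only [norm_zero]
              exact mul_nonneg hK0 (Real.rpow_nonneg (abs_nonneg _) _)))
        (abs_pow_integrableOn hp hlam_mem.1 hlam_mem.2 K)
        (by
          have h1 : ∀ᵐ t ∂(volume.restrict (Set.Icc a b)), t ∈ Set.Icc a b :=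
            ae_restrict_mem measurableSet_Icc
          have h2 : ∀ᵐ t ∂(volume.restrict (Set.Icc a b)), t ≠ lam := by
            rw [ae_iff]
            have hsub : {t : ℝ | ¬ t ≠ lam} = {lam} := by ext t; simp [not_not]
            rw [hsub]
            exact le_antisymm
              (le_trans (Measure.le_iff'.1 Measure.restrict_le_self {lam})
                (le_of_eq Real.volume_singleton)) (zero_le)
          filter_upwards [h1, h2] with t ht htne
          have hpos : (0:ℝ) < |t - lam| := abs_pos.2 (sub_ne_zero.2 htne)
          apply Tendsto.congr' _ (tendsto_const_nhds (x := g1 t))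
          filter_upwards [Ioo_mem_nhdsGT_of_mem ⟨le_refl (0:ℝ), hpos⟩] with δ hδ
          rw [eq_comm, Set.indicator_of_mem]
          refine ⟨ht, fun hIoo => ?_⟩
          rcases hIoo with ⟨hp1, hp2⟩
          have : |t - lam| < δ := abs_sub_lt_iff.mpr ⟨by linarith, by linarith⟩
          exact absurd this (not_lt.mpr hδ.2.le))
      have hconv : ∀ δ : ℝ,
          (∫ t, (Set.Icc a b \ Set.Ioo (lam - δ) (lam + δ)).indicator g1 t
            ∂(volume.restrict (Set.Icc a b)))
          = ∫ t in Set.Icc a b \ Set.Ioo (lam - δ) (lam + δ), g1 t := by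
        intro δ
        rw [integral_indicator (measurableSet_Icc.diff measurableSet_Ioo),
          Measure.restrict_restrict (measurableSet_Icc.diff measurableSet_Ioo),
          Set.inter_eq_left.mpr Set.diff_subset]
      exact key.congr hconv
    have hEq : ∀ᶠ δ in nhdsWithin (0:ℝ) (Set.Ioi 0),
        (∫ t in Set.Icc a b \ Set.Ioo (lam - δ) (lam + δ), ψ t / ((t:ℂ) - (lam:ℂ)))
          = (∫ t in Set.Icc a b \ Set.Ioo (lam - δ) (lam + δ), g1 t) + ψ lam * (c0:ℂ) := by
      filter_upwards [Ioo_mem_nhdsGT_of_mem ⟨le_refl (0:ℝ), hh⟩] with δ hδ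
      obtain ⟨hδ0, hδh⟩ := hδ
      have hau : a ≤ lam - δ := by linarith
      have hvb : lam + δ ≤ b := by linarith
      have hS : Set.Icc a b \ Set.Ioo (lam - δ) (lam + δ)
          = Set.Icc a (lam - δ) ∪ Set.Icc (lam + δ) b := by
        ext t
        simp only [Set.mem_diff, Set.mem_Icc, Set.mem_Ioo, Set.mem_union, not_and, not_lt]
        constructor
        · rintro ⟨⟨h1, h2⟩, h3⟩
          by_cases hc : lam - δ < t
          · exact Or.inr ⟨h3 hc, h2⟩
          · exact Or.inl ⟨h1, le_of_not_gt hc⟩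
        · rintro (⟨h1, h2⟩ | ⟨h1, h2⟩)
          · exact ⟨⟨h1, by linarith⟩, fun hc => by linarith⟩
          · exact ⟨⟨by linarith, h2⟩, fun hc => by linarith⟩
      have hdisj : Disjoint (Set.Icc a (lam - δ)) (Set.Icc (lam + δ) b) := by
        apply Set.disjoint_left.mpr
        rintro t ⟨_, h1⟩ ⟨h2, _⟩; linarith
      have hsub1 : Set.Icc a (lam - δ) ⊆ Set.Icc a b := Set.Icc_subset_Icc le_rfl (by linarith)
      have hsub2 : Set.Icc (lam + δ) b ⊆ Set.Icc a b := Set.Icc_subset_Icc (by linarith) le_rfl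
      have hne1 : ∀ t ∈ Set.Icc a (lam - δ), ((t:ℂ) - (lam:ℂ)) ≠ 0 := by
        intro t ht; exact czne (by rcases ht with ⟨_, h'⟩; intro hteq; rw [hteq] at h'; linarith)
      have hne2 : ∀ t ∈ Set.Icc (lam + δ) b, ((t:ℂ) - (lam:ℂ)) ≠ 0 := by
        intro t ht; exact czne (by rcases ht with ⟨h', _⟩; intro hteq; rw [hteq] at h'; linarith)
      have hinvc : Continuous fun t : ℝ => (t:ℂ) - (lam:ℂ) :=
        Complex.continuous_ofReal.sub continuous_const
      have hf1 : ContinuousOn (fun t : ℝ => ψ t / ((t:ℂ) - (lam:ℂ))) (Set.Icc a (lam - δ)) :=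
        (hcont.mono hsub1).div hinvc.continuousOn hne1
      have hf2 : ContinuousOn (fun t : ℝ => ψ t / ((t:ℂ) - (lam:ℂ))) (Set.Icc (lam + δ) b) :=
        (hcont.mono hsub2).div hinvc.continuousOn hne2
      have hi1 : ContinuousOn (fun t : ℝ => ((t:ℂ) - (lam:ℂ))⁻¹) (Set.Icc a (lam - δ)) :=
        hinvc.continuousOn.inv₀ hne1
      have hi2 : ContinuousOn (fun t : ℝ => ((t:ℂ) - (lam:ℂ))⁻¹) (Set.Icc (lam + δ) b) :=
        hinvc.continuousOn.inv₀ hne2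
      have hL1 : ∫ t in Set.Icc a (lam - δ), ((t:ℂ) - (lam:ℂ))⁻¹
          = Complex.ofReal (Real.log ((lam - δ - lam) / (a - lam))) := by
        rw [integral_Icc_eq_integral_Ioc]
        exact cintegral_inv hau (by
          intro hmem; rw [Set.mem_uIcc] at hmem
          rcases hmem with ⟨h1, h2⟩ | ⟨h1, h2⟩ <;> [linarith; linarith])
      have hL2 : ∫ t in Set.Icc (lam + δ) b, ((t:ℂ) - (lam:ℂ))⁻¹
          = Complex.ofReal (Real.log ((b - lam) / (lam + δ - lam))) := by
        rw [integral_Icc_eq_integral_Ioc]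
        exact cintegral_inv hvb (by
          intro hmem; rw [Set.mem_uIcc] at hmem
          rcases hmem with ⟨h1, h2⟩ | ⟨h1, h2⟩ <;> [linarith; linarith])
      have hdec1 : ∫ t in Set.Icc a (lam - δ), ψ t / ((t:ℂ) - (lam:ℂ))
          = (∫ t in Set.Icc a (lam - δ), g1 t)
            + ψ lam * ∫ t in Set.Icc a (lam - δ), ((t:ℂ) - (lam:ℂ))⁻¹ := by
        rw [← integral_const_mul, ← integral_add (hg1sub hsub1)
          (ContinuousOn.integrableOn_Icc (f := fun t : ℝ => ψ lam * ((t:ℂ) - (lam:ℂ))⁻¹)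
            (continuousOn_const.mul hi1))]
        apply setIntegral_congr_fun measurableSet_Icc
        intro t ht
        have hz := hne1 t ht
        simp only [hg1def]
        field_simp
        ring
      have hdec2 : ∫ t in Set.Icc (lam + δ) b, ψ t / ((t:ℂ) - (lam:ℂ))
          = (∫ t in Set.Icc (lam + δ) b, g1 t)
            + ψ lam * ∫ t in Set.Icc (lam + δ) b, ((t:ℂ) - (lam:ℂ))⁻¹ := by
        rw [← integral_const_mul, ← integral_add (hg1sub hsub2)
          (ContinuousOn.integrableOn_Icc (f := fun t : ℝ => ψ lam * ((t:ℂ) - (lam:ℂ))⁻¹)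
            (continuousOn_const.mul hi2))]
        apply setIntegral_congr_fun measurableSet_Icc
        intro t ht
        have hz := hne2 t ht
        simp only [hg1def]
        field_simp
        ring
      have harith : Real.log ((lam - δ - lam) / (a - lam))
          + Real.log ((b - lam) / (lam + δ - lam)) = c0 := by
        rw [show lam - δ - lam = -δ by ring, show a - lam = -(lam - a) by ring,
          neg_div_neg_eq, show lam + δ - lam = δ by ring,
          Real.log_div (ne_of_gt hδ0) (ne_of_gt hh),
          Real.log_div (ne_of_gt (by linarith : (0:ℝ) < b - lam)) (ne_of_gt hδ0), hc0def]
        ring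
      rw [hS, setIntegral_union hdisj measurableSet_Icc hf1.integrableOn_Icc
          hf2.integrableOn_Icc,
        setIntegral_union hdisj measurableSet_Icc (hg1sub hsub1) (hg1sub hsub2),
        hdec1, hdec2, hL1, hL2, ← harith]
      push_cast
      ring
    have hTV : Tendsto
        (fun δ : ℝ => ∫ t in Set.Icc a b \ Set.Ioo (lam - δ) (lam + δ),
          ψ t / ((t:ℂ) - (lam:ℂ)))
        (nhdsWithin 0 (Set.Ioi 0)) (nhds V) := by
      apply Tendsto.congr' (hEq.mono fun δ hh' => hh'.symm)
      rw [hVdef, ← integral_Icc_eq_integral_Ioo]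
      exact hDCT.add tendsto_const_nhds
    exact tendsto_nhds_unique hR hTV
  -- Step B: the estimate
  set Ffn : ℝ → ℂ := fun t => ψ t * ((lam - a : ℝ) : ℂ)
      / (((t:ℂ) - (lam:ℂ)) * ((t:ℂ) - (a:ℂ))) with hFfndef
  have hIoo_g1 : IntegrableOn g1 (Set.Ioo a b) := hg1sub Set.Ioo_subset_Icc_self
  have hsub_near : Set.Ioo a m ⊆ Set.Ioo a b := Set.Ioo_subset_Ioo le_rfl hm2
  have hsub_far : Set.Ico m b ⊆ Set.Ioo a b := fun t ht => ⟨lt_of_lt_of_le hm1 ht.1, ht.2⟩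
  have hdisj2 : Disjoint (Set.Ioo a m) (Set.Ico m b) := by
    apply Set.disjoint_left.mpr
    rintro t ⟨_, h1⟩ ⟨h2, _⟩
    exact absurd h2 (not_le.2 h1)
  have hsplit1 : (∫ t in Set.Ioo a b, g1 t)
      = (∫ t in Set.Ioo a m, g1 t) + ∫ t in Set.Ico m b, g1 t := by
    rw [← Set.Ioo_union_Ico_eq_Ioo hm1 hm2,
      setIntegral_union hdisj2 measurableSet_Ico (hIoo_g1.mono_set hsub_near)
        (hIoo_g1.mono_set hsub_far)]
  have hsplit2 : (∫ t in Set.Ioo a b, ψ t / ((t:ℂ) - (a:ℂ)))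
      = (∫ t in Set.Ioo a m, ψ t / ((t:ℂ) - (a:ℂ)))
        + ∫ t in Set.Ico m b, ψ t / ((t:ℂ) - (a:ℂ)) := by
    rw [← Set.Ioo_union_Ico_eq_Ioo hm1 hm2,
      setIntegral_union hdisj2 measurableSet_Ico (hg2int.mono_set hsub_near)
        (hg2int.mono_set hsub_far)]
  -- far-region rewriting
  have hsubmb : Set.Icc m b ⊆ Set.Icc a b := Set.Icc_subset_Icc hm1.le le_rfl
  have hne1' : ∀ t ∈ Set.Icc m b, ((t:ℂ) - (lam:ℂ)) ≠ 0 := by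
    intro t ht
    exact czne (by rcases ht with ⟨h', _⟩; intro hteq; rw [hteq] at h'; linarith)
  have hne2' : ∀ t ∈ Set.Icc m b, ((t:ℂ) - (a:ℂ)) ≠ 0 := by
    intro t ht
    exact czne (by rcases ht with ⟨h', _⟩; intro hteq; rw [hteq] at h'; linarith)
  have hinvc1 : Continuous fun t : ℝ => (t:ℂ) - (lam:ℂ) :=
    Complex.continuous_ofReal.sub continuous_const
  have hinvc2 : Continuous fun t : ℝ => (t:ℂ) - (a:ℂ) :=
    Complex.continuous_ofReal.sub continuous_const
  have hFcont : ContinuousOn Ffn (Set.Icc m b) := by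
    apply ContinuousOn.div
    · exact (hcont.mono hsubmb).mul continuousOn_const
    · exact (hinvc1.mul hinvc2).continuousOn
    · intro t ht
      exact mul_ne_zero (hne1' t ht) (hne2' t ht)
  have hicont : ContinuousOn (fun t : ℝ => ψ lam * ((t:ℂ) - (lam:ℂ))⁻¹) (Set.Icc m b) :=
    continuousOn_const.mul (hinvc1.continuousOn.inv₀ hne1')
  have hinvint : ∫ t in Set.Ico m b, ((t:ℂ) - (lam:ℂ))⁻¹
      = Complex.ofReal (Real.log ((b - lam) / (m - lam))) := by
    rw [integral_Ico_eq_integral_Ioo, ← integral_Ioc_eq_integral_Ioo]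
    exact cintegral_inv hm2 (by
      intro hmem; rw [Set.mem_uIcc] at hmem
      rcases hmem with ⟨h1, h2⟩ | ⟨h1, h2⟩ <;> [linarith [hlam_lt_m]; linarith [hlam_lt_m]])
  have hfar : (∫ t in Set.Ico m b, g1 t) - (∫ t in Set.Ico m b, ψ t / ((t:ℂ) - (a:ℂ)))
      = (∫ t in Set.Ico m b, Ffn t)
        - ψ lam * Complex.ofReal (Real.log ((b - lam) / (m - lam))) := by
    rw [← hinvint, ← integral_const_mul,
      ← integral_sub (hFcont.integrableOn_Icc.mono_set Set.Ico_subset_Icc_self)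
        (hicont.integrableOn_Icc.mono_set Set.Ico_subset_Icc_self),
      ← integral_sub (hIoo_g1.mono_set hsub_far) (hg2int.mono_set hsub_far)]
    apply setIntegral_congr_fun measurableSet_Ico
    intro t ht
    have hz1 := hne1' t (Set.Ico_subset_Icc_self ht)
    have hz2 := hne2' t (Set.Ico_subset_Icc_self ht)
    simp only [hg1def, hFfndef]
    push_cast
    field_simp
    ring
  have hc0L : c0 = Real.log ((b - lam) / (m - lam)) := by
    rw [Real.log_div (ne_of_gt (by linarith : (0:ℝ) < b - lam))
      (ne_of_gt (by linarith [hlam_lt_m] : (0:ℝ) < m - lam)), hc0def,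
      show m - lam = lam - a by rw [hmdef]; ring]
  have hEid : (R + (Real.pi:ℂ) * Complex.I * ψ lam)
      - (∫ t in Set.Ioo a b, ψ t / ((t:ℂ) - (a:ℂ)))
      = ((∫ t in Set.Ioo a m, g1 t) - (∫ t in Set.Ioo a m, ψ t / ((t:ℂ) - (a:ℂ))))
        + (∫ t in Set.Ico m b, Ffn t) + (Real.pi:ℂ) * Complex.I * ψ lam := by
    rw [hRV, hVdef, hsplit1, hsplit2, hc0L]
    linear_combination hfar
  rw [hEid]
  -- Norm estimates
  have hha : (0:ℝ) ≤ (lam - a) ^ α := Real.rpow_nonneg hh.le α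
  -- near g1 bound
  have hN1 : ‖∫ t in Set.Ioo a m, g1 t‖ ≤ 2 * (K * (lam - a) ^ α / α) := by
    have hs1 : Set.Ioc a lam ⊆ Set.Icc a b := fun t ht => ⟨ht.1.le, ht.2.trans hlb.le⟩
    have hs2 : Set.Ioc lam m ⊆ Set.Icc a b :=
      fun t ht => ⟨hla.le.trans ht.1.le, ht.2.trans hm2⟩
    have hsplitN : (∫ t in Set.Ioo a m, g1 t)
        = (∫ t in Set.Ioc a lam, g1 t) + ∫ t in Set.Ioc lam m, g1 t := by
      rw [← integral_Ioc_eq_integral_Ioo, ← Set.Ioc_union_Ioc_eq_Ioc hla.le hlam_lt_m.le,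
        setIntegral_union (Set.Ioc_disjoint_Ioc_of_le le_rfl) measurableSet_Ioc (hg1sub hs1)
          (hg1sub hs2)]
    have hb1 : ‖∫ t in Set.Ioc a lam, g1 t‖ ≤ K * (lam - a) ^ α / α := by
      have hle : ‖∫ t in Set.Ioc a lam, g1 t‖
          ≤ ∫ t in Set.Ioc a lam, K * (lam - t) ^ (α - 1) := by
        apply norm_integral_le_of_norm_le
          ((pow_sub_integrableOn' hp hla.le K).mono_set Set.Ioc_subset_Icc_self)
        apply ae_restrict_of_forall_mem measurableSet_Ioc
        intro t ht
        have h := norm_holder_div hα1 (hK t (hs1 ht) lam hlam_mem)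
        rwa [abs_of_nonpos (by linarith [ht.2] : t - lam ≤ 0), neg_sub] at h
      rw [integral_const_mul, integral_pow_sub' hp hla.le,
        show α - 1 + 1 = α by ring] at hle
      calc ‖∫ t in Set.Ioc a lam, g1 t‖ ≤ K * ((lam - a) ^ α / α) := hle
        _ = K * (lam - a) ^ α / α := by ring
    have hb2 : ‖∫ t in Set.Ioc lam m, g1 t‖ ≤ K * (lam - a) ^ α / α := by
      have hle : ‖∫ t in Set.Ioc lam m, g1 t‖
          ≤ ∫ t in Set.Ioc lam m, K * (t - lam) ^ (α - 1) := by
        apply norm_integral_le_of_norm_le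
          ((pow_sub_integrableOn hp hlam_lt_m.le K).mono_set Set.Ioc_subset_Icc_self)
        apply ae_restrict_of_forall_mem measurableSet_Ioc
        intro t ht
        have h := norm_holder_div hα1 (hK t (hs2 ht) lam hlam_mem)
        rwa [abs_of_nonneg (by linarith [ht.1] : (0:ℝ) ≤ t - lam)] at h
      rw [integral_const_mul, integral_pow_sub hp hlam_lt_m.le,
        show α - 1 + 1 = α by ring, show m - lam = lam - a by rw [hmdef]; ring] at hle
      calc ‖∫ t in Set.Ioc lam m, g1 t‖ ≤ K * ((lam - a) ^ α / α) := hle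
        _ = K * (lam - a) ^ α / α := by ring
    calc ‖∫ t in Set.Ioo a m, g1 t‖
        = ‖(∫ t in Set.Ioc a lam, g1 t) + ∫ t in Set.Ioc lam m, g1 t‖ := by rw [hsplitN]
      _ ≤ ‖∫ t in Set.Ioc a lam, g1 t‖ + ‖∫ t in Set.Ioc lam m, g1 t‖ := norm_add_le _ _
      _ ≤ K * (lam - a) ^ α / α + K * (lam - a) ^ α / α := add_le_add hb1 hb2
      _ = 2 * (K * (lam - a) ^ α / α) := by ring
  -- near g2 bound
  have hN2 : ‖∫ t in Set.Ioo a m, ψ t / ((t:ℂ) - (a:ℂ))‖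
      ≤ K * (2 * (lam - a)) ^ α / α := by
    have hle : ‖∫ t in Set.Ioo a m, ψ t / ((t:ℂ) - (a:ℂ))‖
        ≤ ∫ t in Set.Ioo a m, K * (t - a) ^ (α - 1) := by
      apply norm_integral_le_of_norm_le
        ((pow_sub_integrableOn hp hm1.le K).mono_set Set.Ioo_subset_Icc_self)
      apply ae_restrict_of_forall_mem measurableSet_Ioo
      intro t ht
      have htm : t ∈ Set.Icc a b := ⟨ht.1.le, ht.2.le.trans hm2⟩
      rw [hg2eq t]
      have h := norm_holder_div hα1 (hK t htm a hmem_a)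
      rwa [abs_of_nonneg (by linarith [ht.1] : (0:ℝ) ≤ t - a)] at h
    rw [← integral_Ioc_eq_integral_Ioo (f := fun t => K * (t - a) ^ (α - 1)),
      integral_const_mul, integral_pow_sub hp hm1.le,
      show α - 1 + 1 = α by ring, show m - a = 2 * (lam - a) by rw [hmdef]; ring] at hle
    calc ‖∫ t in Set.Ioo a m, ψ t / ((t:ℂ) - (a:ℂ))‖
        ≤ K * ((2 * (lam - a)) ^ α / α) := hle
      _ = K * (2 * (lam - a)) ^ α / α := by ring
  -- far bound
  have hFb : ‖∫ t in Set.Ico m b, Ffn t‖ ≤ K * (2 * (lam - a)) ^ α / (1 - α) := by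
    have hBcont : ContinuousOn (fun t : ℝ => 2 * K * (lam - a) * (t - a) ^ (α - 2))
        (Set.Icc m b) := by
      apply continuousOn_const.mul
      apply ContinuousOn.rpow_const (continuousOn_id.sub continuousOn_const)
      intro t ht
      exact Or.inl (ne_of_gt (by rcases ht with ⟨h', _⟩; show (0:ℝ) < t - a; linarith))
    have hle : ‖∫ t in Set.Ico m b, Ffn t‖
        ≤ ∫ t in Set.Ico m b, 2 * K * (lam - a) * (t - a) ^ (α - 2) := by
      apply norm_integral_le_of_norm_le
        (hBcont.integrableOn_Icc.mono_set Set.Ico_subset_Icc_self)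
      apply ae_restrict_of_forall_mem measurableSet_Ico
      intro t ht
      have h2h : 2 * (lam - a) ≤ t - a := by
        have := ht.1; rw [hmdef] at this; linarith
      have hta : (0:ℝ) < t - a := by linarith
      have htl : (t - a) / 2 ≤ t - lam := by linarith
      have htl0 : (0:ℝ) < t - lam := by linarith
      have hnorm : ‖Ffn t‖ = ‖ψ t‖ * (lam - a) / ((t - lam) * (t - a)) := by
        simp only [hFfndef]
        rw [norm_div, norm_mul, norm_mul, cnorm_sub, cnorm_sub,
          Complex.norm_real, Real.norm_eq_abs,
          abs_of_pos hh, abs_of_pos htl0, abs_of_pos hta]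
      rw [hnorm]
      have hψt : ‖ψ t‖ ≤ K * (t - a) ^ α := by
        have h := hψb t ⟨by linarith, ht.2.le⟩
        rwa [abs_of_pos hta] at h
      calc ‖ψ t‖ * (lam - a) / ((t - lam) * (t - a))
          ≤ (K * (t - a) ^ α) * (lam - a) / (((t - a) / 2) * (t - a)) := by
            apply div_le_div₀ (by positivity)
              (mul_le_mul_of_nonneg_right hψt hh.le) (by positivity)
              (mul_le_mul_of_nonneg_right htl hta.le)
        _ = 2 * K * (lam - a) * (t - a) ^ (α - 2) := by
            rw [Real.rpow_sub hta, show (2:ℝ) = ((2:ℕ):ℝ) by norm_num,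
              Real.rpow_natCast]
            field_simp
    have hval : ∫ t in Set.Ioc m b, (t - a) ^ (α - 2)
        = ((b - a) ^ (α - 1) - (m - a) ^ (α - 1)) / (α - 1) := by
      rw [← intervalIntegral.integral_of_le hm2,
        intervalIntegral.integral_comp_sub_right (fun u => u ^ (α - 2)) a,
        integral_rpow (Or.inr ⟨by linarith, by
          intro hmem; rw [Set.mem_uIcc] at hmem
          rcases hmem with ⟨h1, h2⟩ | ⟨h1, h2⟩ <;> [linarith; linarith]⟩),
        show α - 2 + 1 = α - 1 by ring]
    have hintval : ∫ t in Set.Ico m b, 2 * K * (lam - a) * (t - a) ^ (α - 2)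
        = 2 * K * (lam - a) * (((b - a) ^ (α - 1) - (m - a) ^ (α - 1)) / (α - 1)) := by
      rw [integral_Ico_eq_integral_Ioo, ← integral_Ioc_eq_integral_Ioo,
        integral_const_mul, hval]
    have hma : m - a = 2 * (lam - a) := by rw [hmdef]; ring
    have hba_nonneg : (0:ℝ) ≤ (b - a) ^ (α - 1) :=
      Real.rpow_nonneg (by linarith) _
    have hstep : 2 * K * (lam - a) * (((b - a) ^ (α - 1) - (m - a) ^ (α - 1)) / (α - 1))
        ≤ K * (2 * (lam - a)) ^ α / (1 - α) := by
      have heq1 : (((b - a) ^ (α - 1) - (m - a) ^ (α - 1)) / (α - 1))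
          = (((m - a) ^ (α - 1) - (b - a) ^ (α - 1)) / (1 - α)) := by
        rw [div_eq_div_iff (by linarith) (by linarith)]; ring
      have hrw : (2 * (lam - a)) ^ α = (2 * (lam - a)) ^ (α - 1) * (2 * (lam - a)) := by
        rw [← Real.rpow_add_one (by positivity : (2 * (lam - a)) ≠ 0)]
        ring_nf
      rw [heq1, hma, hrw]
      have hPX : (2 * (lam - a)) ^ (α - 1) - (b - a) ^ (α - 1)
          ≤ (2 * (lam - a)) ^ (α - 1) := by linarith
      calc 2 * K * (lam - a)
            * (((2 * (lam - a)) ^ (α - 1) - (b - a) ^ (α - 1)) / (1 - α))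
          ≤ 2 * K * (lam - a) * ((2 * (lam - a)) ^ (α - 1) / (1 - α)) := by
            apply mul_le_mul_of_nonneg_left _ (by positivity)
            exact (div_le_div_iff_of_pos_right h1α).mpr hPX
        _ = K * ((2 * (lam - a)) ^ (α - 1) * (2 * (lam - a))) / (1 - α) := by ring
    calc ‖∫ t in Set.Ico m b, Ffn t‖
        ≤ ∫ t in Set.Ico m b, 2 * K * (lam - a) * (t - a) ^ (α - 2) := hle
      _ = 2 * K * (lam - a) * (((b - a) ^ (α - 1) - (m - a) ^ (α - 1)) / (α - 1)) := hintval
      _ ≤ K * (2 * (lam - a)) ^ α / (1 - α) := hstep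
  -- pi term
  have hpi : ‖(Real.pi:ℂ) * Complex.I * ψ lam‖ ≤ Real.pi * (K * (lam - a) ^ α) := by
    rw [norm_mul, norm_mul, Complex.norm_I, mul_one, Complex.norm_real, Real.norm_eq_abs,
      abs_of_pos Real.pi_pos]
    apply mul_le_mul_of_nonneg_left _ Real.pi_pos.le
    have h := hψb lam hlam_mem
    rwa [abs_of_pos hh] at h
  -- combine
  have h2pow : (2 * (lam - a)) ^ α ≤ 2 * (lam - a) ^ α := by
    rw [Real.mul_rpow (by norm_num) hh.le]
    have h2 : (2:ℝ) ^ α ≤ 2 := by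
      calc (2:ℝ) ^ α ≤ (2:ℝ) ^ (1:ℝ) :=
            Real.rpow_le_rpow_of_exponent_le one_le_two hα1.le
        _ = 2 := Real.rpow_one 2
    nlinarith
  calc ‖((∫ t in Set.Ioo a m, g1 t) - (∫ t in Set.Ioo a m, ψ t / ((t:ℂ) - (a:ℂ))))
        + (∫ t in Set.Ico m b, Ffn t) + (Real.pi:ℂ) * Complex.I * ψ lam‖
      ≤ ‖(∫ t in Set.Ioo a m, g1 t) - (∫ t in Set.Ioo a m, ψ t / ((t:ℂ) - (a:ℂ)))‖
        + ‖∫ t in Set.Ico m b, Ffn t‖ + ‖(Real.pi:ℂ) * Complex.I * ψ lam‖ := by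
        exact le_trans (norm_add_le _ _) (by gcongr; exact norm_add_le _ _)
    _ ≤ (‖∫ t in Set.Ioo a m, g1 t‖ + ‖∫ t in Set.Ioo a m, ψ t / ((t:ℂ) - (a:ℂ))‖)
        + ‖∫ t in Set.Ico m b, Ffn t‖ + ‖(Real.pi:ℂ) * Complex.I * ψ lam‖ := by
        gcongr
        exact norm_sub_le _ _
    _ ≤ (2 * (K * (lam - a) ^ α / α) + K * (2 * (lam - a)) ^ α / α)
        + K * (2 * (lam - a)) ^ α / (1 - α) + Real.pi * (K * (lam - a) ^ α) := by
        gcongr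
    _ ≤ (4/α + 2/(1-α) + Real.pi) * K * (lam - a) ^ α := by
        have hKb : K * (2 * (lam - a)) ^ α ≤ 2 * (K * (lam - a) ^ α) := by
          have := mul_le_mul_of_nonneg_left h2pow hK0
          nlinarith
        have e1 : K * (2 * (lam - a)) ^ α / α ≤ 2 * (K * (lam - a) ^ α) / α :=
          (div_le_div_iff_of_pos_right hα0).mpr hKb
        have e2 : K * (2 * (lam - a)) ^ α / (1 - α) ≤ 2 * (K * (lam - a) ^ α) / (1 - α) :=
          (div_le_div_iff_of_pos_right h1α).mpr hKb
        have heqR : (4/α + 2/(1-α) + Real.pi) * K * (lam - a) ^ α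
            = 2 * (K * (lam - a) ^ α / α) + 2 * (K * (lam - a) ^ α) / α
              + 2 * (K * (lam - a) ^ α) / (1 - α) + Real.pi * (K * (lam - a) ^ α) := by
          field_simp
          ring
        rw [heqR]
        have := add_le_add (add_le_add (le_refl (2 * (K * (lam - a) ^ α / α))) e1) e2
        linarith
    _ ≤ (4/α + 2/(1-α) + Real.pi) * holderNorm a b α ψ * |lam - a| ^ α := by
        rw [abs_of_pos hh]
        exact mul_le_mul_of_nonneg_right
          (mul_le_mul_of_nonneg_left hKN (by positivity)) hha
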